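/- Let r,s,t be nonnegative integers with r < t and s < t. Then there exists a unique real number α > 0 such that α^(t²) = α^(r²) + α^(s²), and this α satisfies α > 1. -/

import Mathlib

/-- For `0 ≤ r < t`, `0 ≤ s < t` there is a unique `α > 0` with
`α^(t²) = α^(r²) + α^(s²)`, and it satisfies `α > 1`. -/
theorem exists_unique_alpha (r s t : ℕ) (hrt : r < t) (hst : s < t) :
    (∃! α : ℝ, 0 < α ∧ α ^ (t ^ 2) = α ^ (r ^ 2) + α ^ (s ^ 2)) ∧
    (∀ α : ℝ, 0 < α → α ^ (t ^ 2) = α ^ (r ^ 2) + α ^ (s ^ 2) → 1 < α) := by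
  set a := t ^ 2 - r ^ 2 with ha
  set b := t ^ 2 - s ^ 2 with hb
  have hrt2 : r ^ 2 < t ^ 2 := Nat.pow_lt_pow_left hrt (by norm_num)
  have hst2 : s ^ 2 < t ^ 2 := Nat.pow_lt_pow_left hst (by norm_num)
  have har : r ^ 2 + a = t ^ 2 := by omega
  have hbs : s ^ 2 + b = t ^ 2 := by omega
  have ha0 : a ≠ 0 := by omega
  have hb0 : b ≠ 0 := by omega
  -- the key equivalence via x = α⁻¹
  have key : ∀ α : ℝ, 0 < α →
      (α ^ (t ^ 2) = α ^ (r ^ 2) + α ^ (s ^ 2) ↔ (α⁻¹) ^ a + (α⁻¹) ^ b = 1) := by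
    intro α hα
    have hα0 : α ≠ 0 := ne_of_gt hα
    have hαt : (0:ℝ) < α ^ (t ^ 2) := pow_pos hα _
    have h1 : (α⁻¹) ^ a * α ^ (t ^ 2) = α ^ (r ^ 2) := by
      rw [← har, pow_add]
      field_simp
      rw [one_div, ← mul_pow, inv_mul_cancel₀ hα0, one_pow]
    have h2 : (α⁻¹) ^ b * α ^ (t ^ 2) = α ^ (s ^ 2) := by
      rw [← hbs, pow_add]
      field_simp
      rw [one_div, ← mul_pow, inv_mul_cancel₀ hα0, one_pow]
    constructor
    · intro h
      have : ((α⁻¹) ^ a + (α⁻¹) ^ b) * α ^ (t ^ 2) = 1 * α ^ (t ^ 2) := by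
        rw [add_mul, h1, h2, one_mul, h]
      exact mul_right_cancel₀ (ne_of_gt hαt) this
    · intro h
      have : ((α⁻¹) ^ a + (α⁻¹) ^ b) * α ^ (t ^ 2) = α ^ (r ^ 2) + α ^ (s ^ 2) := by
        rw [add_mul, h1, h2]
      rw [h, one_mul] at this
      exact this
  -- strict monotonicity of x ↦ x^a + x^b on [0, ∞)
  have mono : StrictMonoOn (fun x : ℝ => x ^ a + x ^ b) (Set.Ici 0) := by
    intro x hx y _ hxy
    exact add_lt_add (pow_lt_pow_left₀ hxy hx ha0) (pow_lt_pow_left₀ hxy hx hb0)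
  -- existence of x ∈ (0,1) with x^a + x^b = 1
  have f0 : ((0:ℝ) ^ a + (0:ℝ) ^ b) = 0 := by
    rw [zero_pow ha0, zero_pow hb0, add_zero]
  have f1 : ((1:ℝ) ^ a + (1:ℝ) ^ b) = 2 := by norm_num
  obtain ⟨x, hxI, hfx⟩ : ∃ x ∈ Set.Icc (0:ℝ) 1, x ^ a + x ^ b = 1 := by
    have hcont : ContinuousOn (fun x : ℝ => x ^ a + x ^ b) (Set.Icc 0 1) :=
      (Continuous.add (continuous_pow a) (continuous_pow b)).continuousOn
    have := intermediate_value_Icc (by norm_num : (0:ℝ) ≤ 1) hcont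
    have h1mem : (1:ℝ) ∈ Set.Icc ((fun x : ℝ => x ^ a + x ^ b) 0)
        ((fun x : ℝ => x ^ a + x ^ b) 1) := by
      simp only [f0, f1]
      constructor <;> norm_num
    obtain ⟨x, hx, hfx⟩ := this h1mem
    exact ⟨x, hx, hfx⟩
  have hx0 : 0 < x := by
    rcases lt_or_eq_of_le hxI.1 with h | h
    · exact h
    · exfalso; rw [← h] at hfx; rw [f0] at hfx; norm_num at hfx
  have hx1 : x < 1 := by
    rcases lt_or_eq_of_le hxI.2 with h | h
    · exact h
    · exfalso; rw [h, f1] at hfx; norm_num at hfx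
  -- uniqueness of positive solution x
  have xuniq : ∀ y : ℝ, 0 < y → y ^ a + y ^ b = 1 → y = x := by
    intro y hy hfy
    exact mono.injOn (le_of_lt hy) (le_of_lt hx0) (hfy.trans hfx.symm)
  -- solutions satisfy α > 1
  have gt1 : ∀ α : ℝ, 0 < α → α ^ (t ^ 2) = α ^ (r ^ 2) + α ^ (s ^ 2) → 1 < α := by
    intro α hα heq
    have hinv : (α⁻¹) ^ a + (α⁻¹) ^ b = 1 := (key α hα).mp heq
    have hinvpos : 0 < α⁻¹ := inv_pos.mpr hα
    have : α⁻¹ = x := xuniq _ hinvpos hinv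
    have : α⁻¹ < 1 := this ▸ hx1
    have := (inv_lt_one_iff₀ (a := α)).mp this
    rcases this with h | h
    · linarith
    · exact h
  refine ⟨⟨x⁻¹, ⟨inv_pos.mpr hx0, ?_⟩, ?_⟩, gt1⟩
  · rw [key x⁻¹ (inv_pos.mpr hx0), inv_inv]
    exact hfx
  · rintro β ⟨hβ, hβeq⟩
    have hinv : (β⁻¹) ^ a + (β⁻¹) ^ b = 1 := (key β hβ).mp hβeq
    have : β⁻¹ = x := xuniq _ (inv_pos.mpr hβ) hinv
    rw [← this, inv_inv]
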